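/- For every θ ∈ (π/2, 3π/4] there exists C > 0 such that for every y ∈ ℂ with y ≠ 0, |arg y| ≤ θ and |Im y| ≤ π, one has 1 − e^{−y} ≠ 0 and |y e^{−y}| ≤ C |1 − e^{−y}|. -/

import Mathlib

open Real

set_option maxHeartbeats 1000000 in
/-- The bound |y e^{−y}| ≤ C|1 − e^{−y}| for y in a sector with bounded imaginary part. -/
theorem sector_exp_ratio_bound (θ : ℝ) (hθ : θ ∈ Set.Ioc (π / 2) (3 * π / 4)) :
    ∃ C : ℝ, 0 < C ∧ ∀ y : ℂ, y ≠ 0 → |y.arg| ≤ θ → |y.im| ≤ π →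
      1 - Complex.exp (-y) ≠ 0 ∧
        ‖y * Complex.exp (-y)‖ ≤ C * ‖1 - Complex.exp (-y)‖ := by
  have hpi : (3.141592 : ℝ) < π := Real.pi_gt_d6
  have hpi' : π < 3.15 := by
    have := Real.pi_lt_d2; linarith
  have he1 : (2.7182818283 : ℝ) < Real.exp 1 := Real.exp_one_gt_d9
  have he2 : Real.exp 1 < 2.7182818286 := Real.exp_one_lt_d9
  refine ⟨1400 * Real.exp 10, by positivity, ?_⟩
  intro y hy harg him
  set x := y.re with hxdef
  set v := y.im with hvdef
  have habsexp : ‖Complex.exp (-y)‖ = Real.exp (-x) := by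
    rw [Complex.norm_exp]; simp; rfl
  have habsy_le : ‖y‖ ≤ |x| + |v| := Complex.norm_le_abs_re_add_abs_im y
  have hxle : |x| ≤ ‖y‖ := Complex.abs_re_le_norm y
  have habsmul : ‖y * Complex.exp (-y)‖ = ‖y‖ * Real.exp (-x) := by
    rw [norm_mul, habsexp]
  -- useful numeric facts
  have hq14 : Real.exp (1/4 : ℝ) ≥ 5/4 := by
    have := Real.add_one_le_exp (1/4 : ℝ); linarith
  have hq14' : Real.exp (1/4 : ℝ) ≤ 4/3 := by
    have h4 : (Real.exp (1/4 : ℝ))^4 = Real.exp 1 := by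
      rw [← Real.exp_nat_mul]; norm_num
    nlinarith [Real.exp_pos (1/4 : ℝ), sq_nonneg (Real.exp (1/4:ℝ) - 4/3),
      sq_nonneg (Real.exp (1/4:ℝ) + 4/3), sq_nonneg (Real.exp (1/4:ℝ)^2 - 16/9)]
  have hq12 : Real.exp (1/2 : ℝ) ≤ 2 := by
    nlinarith [Real.exp_pos (1/2 : ℝ),
      (by rw [← Real.exp_add]; norm_num : Real.exp (1/2 : ℝ) * Real.exp (1/2) = Real.exp 1)]
  by_cases hA : ‖y‖ ≤ 1/2
  · -- small y : |1 - exp(-y)| ≥ |y|/2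
    have hb := Complex.exp_bound (x := -y) (by rw [norm_neg]; linarith) (n := 2) (by norm_num)
    have hsum : ∑ m ∈ Finset.range 2, (-y) ^ m / m.factorial = 1 - y := by
      simp [Finset.sum_range_succ]; ring
    rw [hsum, norm_neg] at hb
    have hb' : ‖Complex.exp (-y) - (1 - y)‖ ≤ ‖y‖ ^ 2 * (3/4) := by
      convert hb using 2; norm_num
    have hlow : ‖y‖ / 2 ≤ ‖1 - Complex.exp (-y)‖ := by
      have h1 : ‖1 - Complex.exp (-y)‖ ≥
          ‖y‖ - ‖Complex.exp (-y) - (1 - y)‖ := by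
        have h2 := norm_sub_norm_le y (Complex.exp (-y) - (1 - y))
        have heq : y - (Complex.exp (-y) - (1 - y)) = 1 - Complex.exp (-y) := by ring
        rw [heq] at h2
        exact h2
      nlinarith [norm_nonneg y]
    have hypos : 0 < ‖y‖ := by
      simpa [norm_pos_iff] using hy
    refine ⟨?_, ?_⟩
    · intro h0
      rw [h0, norm_zero] at hlow; linarith
    · have hex : Real.exp (-x) ≤ 2 := by
        calc Real.exp (-x) ≤ Real.exp (1/2) := by
              apply Real.exp_le_exp.2
              have : -x ≤ |x| := neg_le_abs x
              linarith
          _ ≤ 2 := hq12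
      rw [habsmul]
      have hC : (4 : ℝ) ≤ 1400 * Real.exp 10 := by
        nlinarith [Real.exp_pos (10 : ℝ), Real.add_one_le_exp (10 : ℝ)]
      calc ‖y‖ * Real.exp (-x) ≤ ‖y‖ * 2 := by
            exact mul_le_mul_of_nonneg_left hex (norm_nonneg y)
        _ = 4 * (‖y‖ / 2) := by ring
        _ ≤ 1400 * Real.exp 10 * ‖1 - Complex.exp (-y)‖ := by
            apply mul_le_mul hC hlow (by positivity) (by positivity)
  · -- |y| > 1/2
    push_neg at hA
    -- first derive x ≥ -10 from the argument bound
    have hvpi : |v| ≤ π := him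
    have hxlb : -10 ≤ x := by
      have hcosarg : Real.cos (Complex.arg y) = x / ‖y‖ := Complex.cos_arg hy
      have hargpi : |Complex.arg y| ≤ π := abs_le.2 ⟨(Complex.neg_pi_lt_arg y).le, Complex.arg_le_pi y⟩
      have hcos1 : Real.cos (3 * π / 4) ≤ Real.cos |Complex.arg y| := by
        apply Real.cos_le_cos_of_nonneg_of_le_pi (abs_nonneg _) (by linarith)
        linarith [hθ.2, harg]
      have hcos34 : Real.cos (3 * π / 4) = -(Real.sqrt 2 / 2) := by
        have : (3 * π / 4 : ℝ) = π - π/4 := by ring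
        rw [this, Real.cos_pi_sub, Real.cos_pi_div_four]
      have hsqrt2 : Real.sqrt 2 ≤ 3/2 := by
        nlinarith [Real.sq_sqrt (by norm_num : (2:ℝ) ≥ 0), Real.sqrt_nonneg 2]
      have hcosge : Real.cos (Complex.arg y) ≥ -(3/4) := by
        rw [← Real.cos_abs]; rw [hcos34] at hcos1; linarith
      have hypos : 0 < ‖y‖ := by simpa [norm_pos_iff] using hy
      have hx_eq : x = Real.cos (Complex.arg y) * ‖y‖ := by
        rw [hcosarg]; field_simp
      by_cases hx0 : 0 ≤ x
      · linarith
      · push_neg at hx0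
        have h1 : x ≥ -(3/4) * ‖y‖ := by
          rw [hx_eq]
          exact mul_le_mul_of_nonneg_right hcosge (le_of_lt hypos)
        have h2 : ‖y‖ ≤ -x + π := by
          have : |x| = -x := abs_of_neg hx0
          linarith [habsy_le]
        have h3 : -(3/4) * ‖y‖ ≥ -(3/4) * (-x + π) := by linarith
        linarith
    by_cases hB : 1 ≤ x
    · -- large real part
      have hlow : (1:ℝ)/2 ≤ ‖1 - Complex.exp (-y)‖ := by
        have h1 : ‖(1:ℂ)‖ - ‖Complex.exp (-y)‖ ≤ ‖(1:ℂ) - Complex.exp (-y)‖ :=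
          norm_sub_norm_le _ _
        rw [habsexp, norm_one] at h1
        have : Real.exp (-x) ≤ Real.exp (-1) := Real.exp_le_exp.2 (by linarith)
        have he : Real.exp (-1) ≤ 1/2 := by
          rw [Real.exp_neg]
          rw [inv_le_comm₀ (Real.exp_pos 1) (by norm_num)]
          linarith
        linarith
      refine ⟨?_, ?_⟩
      · intro h0; rw [h0, norm_zero] at hlow; linarith
      · rw [habsmul]
        -- |y| e^{-x} ≤ (x+π) e^{-x} ≤ 17
        have hxv : ‖y‖ ≤ x + π := by
          have : |x| = x := abs_of_nonneg (by linarith)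
          linarith [habsy_le]
        have hexpx : (1 + x/2)^2 ≤ Real.exp x := by
          have h2 : Real.exp (x/2) ≥ 1 + x/2 := by linarith [Real.add_one_le_exp (x/2)]
          have h3 : Real.exp (x/2) * Real.exp (x/2) = Real.exp x := by
            rw [← Real.exp_add]; ring_nf
          nlinarith [Real.exp_pos (x/2)]
        have hub : ‖y‖ * Real.exp (-x) ≤ 17 := by
          rw [Real.exp_neg, mul_inv_le_iff₀ (Real.exp_pos x)]
          nlinarith [hexpx, sq_nonneg x]
        have hC2 : (34 : ℝ) ≤ 1400 * Real.exp 10 := by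
          nlinarith [Real.add_one_le_exp (10 : ℝ)]
        calc ‖y‖ * Real.exp (-x) ≤ 17 := hub
          _ = 34 * (1/2) := by norm_num
          _ ≤ 1400 * Real.exp 10 * ‖1 - Complex.exp (-y)‖ :=
              mul_le_mul hC2 hlow (by norm_num) (by positivity)
    · -- middle region: -10 ≤ x < 1, |y| > 1/2
      push_neg at hB
      have hlow : (1:ℝ)/10 ≤ ‖1 - Complex.exp (-y)‖ := by
        rcases le_or_gt (1/4 : ℝ) x with hx4 | hx4
        · -- x ≥ 1/4
          have h1 : ‖(1:ℂ)‖ - ‖Complex.exp (-y)‖ ≤ ‖(1:ℂ) - Complex.exp (-y)‖ :=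
            norm_sub_norm_le _ _
          rw [habsexp, norm_one] at h1
          have h2 : Real.exp (-x) ≤ Real.exp (-(1/4)) := Real.exp_le_exp.2 (by linarith)
          have h3 : Real.exp (-(1/4 : ℝ)) ≤ 4/5 := by
            rw [Real.exp_neg, inv_le_comm₀ (Real.exp_pos _) (by norm_num)]
            linarith
          linarith
        rcases le_or_gt x (-(1/4) : ℝ) with hx4' | hx4'
        · -- x ≤ -1/4
          have h1 : ‖Complex.exp (-y)‖ - ‖(1:ℂ)‖ ≤ ‖(1:ℂ) - Complex.exp (-y)‖ := by
            rw [norm_sub_rev]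
            exact norm_sub_norm_le _ _
          rw [habsexp, norm_one] at h1
          have h2 : Real.exp (1/4 : ℝ) ≤ Real.exp (-x) := Real.exp_le_exp.2 (by linarith)
          linarith
        · -- |x| < 1/4, so |v| ≥ 1/4
          have hv4 : (1/4 : ℝ) ≤ |v| := by
            have : |x| < 1/4 := abs_lt.2 ⟨by linarith, hx4⟩
            linarith [habsy_le]
          have hre : (1 - Complex.exp (-y)).re = 1 - Real.exp (-x) * Real.cos v := by
            rw [Complex.sub_re, Complex.exp_re]
            simp [Real.cos_neg]; rfl
          have him' : (1 - Complex.exp (-y)).im = Real.exp (-x) * Real.sin v := by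
            rw [Complex.sub_im, Complex.exp_im]
            simp [Real.sin_neg]; rfl
          rcases le_or_gt (Real.cos v) 0 with hcv | hcv
          · -- cos v ≤ 0 : real part ≥ 1
            have h1 : |(1 - Complex.exp (-y)).re| ≤ ‖1 - Complex.exp (-y)‖ :=
              Complex.abs_re_le_norm _
            rw [hre] at h1
            have h2 : Real.exp (-x) * Real.cos v ≤ 0 :=
              mul_nonpos_of_nonneg_of_nonpos (Real.exp_pos _).le hcv
            have : (1:ℝ) ≤ |1 - Real.exp (-x) * Real.cos v| := by
              rw [abs_of_nonneg (by linarith)]; linarith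
            linarith
          · -- cos v > 0 ⇒ |v| < π/2, sin bound
            have hvlt : |v| < π/2 := by
              by_contra hcon
              push_neg at hcon
              have : Real.cos |v| ≤ 0 :=
                Real.cos_nonpos_of_pi_div_two_le_of_le hcon (by linarith)
              rw [Real.cos_abs] at this
              linarith
            have hsin : Real.sin (1/4 : ℝ) ≤ Real.sin |v| := by
              apply Real.sin_le_sin_of_le_of_le_pi_div_two (by linarith [Real.pi_pos])
                (le_of_lt hvlt) hv4
            have hsin14 : (1/5 : ℝ) ≤ Real.sin (1/4 : ℝ) := by
              have := Real.sin_gt_sub_cube (by norm_num : (0:ℝ) < 1/4)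
              nlinarith
            have hex : (3/4 : ℝ) ≤ Real.exp (-x) := by
              have h2 : Real.exp (-(1/4 : ℝ)) ≤ Real.exp (-x) := Real.exp_le_exp.2 (by linarith)
              have h3 : (3/4 : ℝ) ≤ Real.exp (-(1/4 : ℝ)) := by
                rw [Real.exp_neg, le_inv_comm₀ (by norm_num) (Real.exp_pos _)]
                linarith
              linarith
            have h1 : |(1 - Complex.exp (-y)).im| ≤ ‖1 - Complex.exp (-y)‖ :=
              Complex.abs_im_le_norm _
            rw [him'] at h1
            have hsv : |Real.sin v| = Real.sin |v| := by
              rcases le_or_gt 0 v with h0 | h0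
              · rw [abs_of_nonneg h0, abs_of_nonneg]
                exact Real.sin_nonneg_of_nonneg_of_le_pi h0 (by linarith [abs_le.1 hvpi])
              · rw [abs_of_neg h0, Real.sin_neg, abs_of_nonpos]
                have : Real.sin (-v) ≥ 0 := by
                  apply Real.sin_nonneg_of_nonneg_of_le_pi (by linarith)
                  have := abs_le.1 hvpi; linarith
                rw [Real.sin_neg] at this; linarith
            have h2 : |Real.exp (-x) * Real.sin v| = Real.exp (-x) * Real.sin |v| := by
              rw [abs_mul, abs_of_nonneg (Real.exp_pos _).le, hsv]
            rw [h2] at h1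
            nlinarith
      refine ⟨?_, ?_⟩
      · intro h0; rw [h0, norm_zero] at hlow; linarith
      · rw [habsmul]
        have hub1 : ‖y‖ ≤ 14 := by
          have : |x| ≤ 10 := abs_le.2 ⟨by linarith, by linarith⟩
          calc ‖y‖ ≤ |x| + |v| := habsy_le
            _ ≤ 10 + π := by linarith
            _ ≤ 14 := by linarith
        have hub2 : Real.exp (-x) ≤ Real.exp 10 := Real.exp_le_exp.2 (by linarith)
        calc ‖y‖ * Real.exp (-x) ≤ 14 * Real.exp 10 := by
              apply mul_le_mul hub1 hub2 (Real.exp_pos _).le (by norm_num)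
          _ = (140 * Real.exp 10) * (1/10) := by ring
          _ ≤ (1400 * Real.exp 10) * ‖1 - Complex.exp (-y)‖ := by
              apply mul_le_mul (by nlinarith [Real.exp_pos (10:ℝ)]) hlow (by norm_num)
                (by positivity)
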